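/- Let μ, ν be probability measures on ℝ with finite second moments, Fμ, Fν their cumulative distribution functions and Fμ⁻¹, Fν⁻¹ their quantile functions. There exists a measurable map T : ℝ → ℝ such that the unique W₂-optimal coupling between μ and ν equals (Id,T)#μ if and only if, for every x ∈ ℝ with μ({x}) > 0, the quantile function Fν⁻¹ is constant on the interval (Fμ(x−), Fμ(x)]. In that case T(x) = Fν⁻¹(Fμ(x)) gives the unique optimal transport map. -/

import Mathlib

open MeasureTheory ProbabilityTheory Set Filter
open scoped ENNReal

noncomputable section

/-- π is a coupling of μ and ν (on ℝ). -/
def IsCouplingR (π : Measure (ℝ × ℝ)) (μ ν : Measure ℝ) : Prop :=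
  π.map Prod.fst = μ ∧ π.map Prod.snd = ν

/-- quadratic transport cost. -/
def costR (π : Measure (ℝ × ℝ)) : ℝ := ∫ p, (p.2 - p.1) ^ 2 ∂π

/-- squared quadratic Wasserstein distance on ℝ. -/
def W2sqR (μ ν : Measure ℝ) : ℝ := sInf (costR '' {π | IsCouplingR π μ ν})

/-- π is a W₂-optimal coupling. -/
def IsOptimalCouplingR (π : Measure (ℝ × ℝ)) (μ ν : Measure ℝ) : Prop :=
  IsCouplingR π μ ν ∧ costR π = W2sqR μ ν

/-- the coupling (Id, T)#μ. -/
def givenByMapR (μ : Measure ℝ) (T : ℝ → ℝ) : Measure (ℝ × ℝ) :=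
  μ.map (fun x => (x, T x))

/-- cumulative distribution function F_μ(x) = μ((-∞,x]). -/
def Fcdf (μ : Measure ℝ) (x : ℝ) : ℝ := (μ (Set.Iic x)).toReal

/-- left limit F_μ(x-) = μ((-∞,x)). -/
def Fleft (μ : Measure ℝ) (x : ℝ) : ℝ := (μ (Set.Iio x)).toReal

/-- quantile function F_μ⁻¹(u) = inf {x : F_μ(x) ≥ u}. -/
def Finv (μ : Measure ℝ) (u : ℝ) : ℝ := sInf {x : ℝ | u ≤ Fcdf μ x}

/-- finite second moment. -/
def FiniteSecondMomentR (μ : Measure ℝ) : Prop := Integrable (fun x => x ^ 2) μ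

/-- convex order on ℝ. -/
def ConvexOrderR (η ν : Measure ℝ) : Prop :=
  ∀ φ : ℝ → ℝ, ConvexOn ℝ Set.univ φ → Integrable φ η → Integrable φ ν →
    ∫ x, φ x ∂η ≤ ∫ y, φ y ∂ν

/-- martingale coupling between η and ν: disintegrates as η(dz)m(z,dy) with barycenter z. -/
def IsMartingaleCouplingR (π : Measure (ℝ × ℝ)) (η ν : Measure ℝ) : Prop :=
  IsCouplingR π η ν ∧ ∃ m : Kernel ℝ ℝ, IsMarkovKernel m ∧ π = η.compProd m ∧
    ∀ᵐ z ∂η, ∫ y, y ∂(m z) = z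


set_option linter.unusedSectionVars false
set_option maxHeartbeats 1000000 in
section
open scoped Topology

namespace OTAux

variable (η : Measure ℝ) [IsProbabilityMeasure η]

lemma Fcdf_eq_cdf : Fcdf η = ⇑(cdf η) :=
  funext fun x => (cdf_eq_real η x).symm

lemma Fcdf_mono : Monotone (Fcdf η) := by
  rw [Fcdf_eq_cdf]; exact monotone_cdf η

lemma Fcdf_nonneg (x : ℝ) : 0 ≤ Fcdf η x := ENNReal.toReal_nonneg

lemma Fcdf_le_one (x : ℝ) : Fcdf η x ≤ 1 := by
  rw [Fcdf_eq_cdf]; exact cdf_le_one η x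

lemma measure_Iic_eq (x : ℝ) : η (Set.Iic x) = ENNReal.ofReal (Fcdf η x) := by
  rw [Fcdf_eq_cdf]; exact (ofReal_cdf η x).symm

lemma Fleft_nonneg (x : ℝ) : 0 ≤ Fleft η x := ENNReal.toReal_nonneg

lemma Fleft_le_Fcdf (x : ℝ) : Fleft η x ≤ Fcdf η x :=
  ENNReal.toReal_mono (measure_ne_top η _) (measure_mono Set.Iio_subset_Iic_self)

lemma Fcdf_eq_Fleft_add (x : ℝ) : Fcdf η x = Fleft η x + (η {x}).toReal := by
  have h : Set.Iic x = Set.Iio x ∪ {x} := by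
    ext z; simp [le_iff_lt_or_eq]
  have hd : Disjoint (Set.Iio x) ({x} : Set ℝ) := by
    simp [Set.disjoint_singleton_right]
  rw [Fcdf, h, measure_union hd (measurableSet_singleton x), Fleft,
    ENNReal.toReal_add (measure_ne_top η _) (measure_ne_top η _)]

lemma atom_pos_iff (x : ℝ) : 0 < η {x} ↔ Fleft η x < Fcdf η x := by
  rw [Fcdf_eq_Fleft_add η x, lt_add_iff_pos_right, ENNReal.toReal_pos_iff]
  constructor
  · exact fun h => ⟨h, measure_lt_top η _⟩
  · exact fun h => h.1

variable {η}

lemma bddBelow_S {u : ℝ} (hu : 0 < u) : BddBelow {x : ℝ | u ≤ Fcdf η x} := by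
  have h0 : Tendsto (Fcdf η) atBot (𝓝 0) := by
    rw [Fcdf_eq_cdf]; exact tendsto_cdf_atBot η
  obtain ⟨y, hy⟩ := (h0.eventually_lt_const hu).exists
  refine ⟨y, fun z hz => ?_⟩
  by_contra h
  push_neg at h
  exact absurd (le_trans hz (Fcdf_mono η h.le)) (not_le.2 hy)

lemma S_nonempty {u : ℝ} (hu : u < 1) : ∃ x, u ≤ Fcdf η x := by
  have h1 : Tendsto (Fcdf η) atTop (𝓝 1) := by
    rw [Fcdf_eq_cdf]; exact tendsto_cdf_atTop η
  obtain ⟨y, hy⟩ := (h1.eventually_const_lt hu).exists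
  exact ⟨y, hy.le⟩

lemma Finv_le {u x : ℝ} (hu : 0 < u) (hx : u ≤ Fcdf η x) : Finv η u ≤ x :=
  csInf_le (bddBelow_S hu) hx

lemma le_Fcdf_Finv {u : ℝ} (hu : 0 < u) (hne : ∃ x, u ≤ Fcdf η x) :
    u ≤ Fcdf η (Finv η u) := by
  set m := Finv η u with hm
  have key : ∀ ε : ℝ, 0 < ε → u ≤ Fcdf η (m + ε) := by
    intro ε hε
    obtain ⟨a, ha, hlt⟩ := Real.lt_sInf_add_pos hne hε
    exact le_trans ha (Fcdf_mono η hlt.le)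
  by_contra h
  push_neg at h
  have hrc : ContinuousWithinAt (Fcdf η) (Set.Ici m) m := by
    rw [Fcdf_eq_cdf]; exact (cdf η).right_continuous m
  have hev : ∀ᶠ y in 𝓝[>] m, Fcdf η y < u :=
    (hrc.mono Set.Ioi_subset_Ici_self).eventually_lt_const h
  obtain ⟨y, hy, hym⟩ := (hev.and self_mem_nhdsWithin).exists
  have := key (y - m) (by linarith [hym])
  rw [add_sub_cancel] at this
  exact absurd this (not_le.2 hy)

lemma Finv_le_iff {u x : ℝ} (hu : 0 < u) (hne : ∃ z, u ≤ Fcdf η z) :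
    Finv η u ≤ x ↔ u ≤ Fcdf η x :=
  ⟨fun h => le_trans (le_Fcdf_Finv hu hne) (Fcdf_mono η h), Finv_le hu⟩

lemma lt_Finv_iff {u x : ℝ} (hu : 0 < u) (hne : ∃ z, u ≤ Fcdf η z) :
    x < Finv η u ↔ Fcdf η x < u := by
  rw [← not_le, ← not_le, not_iff_not]
  exact Finv_le_iff hu hne

lemma Finv_mono {u v : ℝ} (hu : 0 < u) (huv : u ≤ v) (hne : ∃ z, v ≤ Fcdf η z) :
    Finv η u ≤ Finv η v :=
  csInf_le_csInf (bddBelow_S hu) hne (fun x hx => le_trans huv hx)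

lemma Fleft_Finv_le {u : ℝ} (hu : 0 < u) (hne : ∃ z, u ≤ Fcdf η z) :
    Fleft η (Finv η u) ≤ u := by
  set x := Finv η u with hx
  have hlt : ∀ y : ℝ, y < x → Fcdf η y < u := by
    intro y hy
    by_contra h
    push_neg at h
    exact absurd (Finv_le hu h) (not_le.2 hy)
  have hsub : Set.Iio x = ⋃ n : ℕ, Set.Iic (x - (n + 1 : ℝ)⁻¹) := by
    ext z
    simp only [Set.mem_Iio, Set.mem_iUnion, Set.mem_Iic]
    constructor
    · intro hz
      obtain ⟨n, hn⟩ := exists_nat_one_div_lt (show (0:ℝ) < x - z by linarith)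
      rw [one_div] at hn
      exact ⟨n, by linarith⟩
    · rintro ⟨n, hn⟩
      have : (0:ℝ) < (n + 1 : ℝ)⁻¹ := by positivity
      linarith
  have hmono : Monotone (fun n : ℕ => Set.Iic (x - (n + 1 : ℝ)⁻¹)) := by
    intro a b hab
    apply Set.Iic_subset_Iic.2
    have : (b + 1 : ℝ)⁻¹ ≤ (a + 1 : ℝ)⁻¹ := by
      apply inv_anti₀ (by positivity) (by exact_mod_cast by linarith)
    linarith
  have := (hmono.directed_le).measure_iUnion (μ := η)
  rw [← hsub] at this
  have hle : ∀ n : ℕ, η (Set.Iic (x - (n + 1 : ℝ)⁻¹)) ≤ ENNReal.ofReal u := by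
    intro n
    rw [measure_Iic_eq]
    refine ENNReal.ofReal_le_ofReal (hlt _ ?_).le
    have h1 : (0:ℝ) < (n + 1 : ℝ)⁻¹ := by positivity
    linarith
  have hfin : η (Set.Iio x) ≤ ENNReal.ofReal u := by
    rw [this]; exact iSup_le hle
  calc Fleft η x ≤ (ENNReal.ofReal u).toReal :=
        ENNReal.toReal_mono ENNReal.ofReal_ne_top hfin
    _ = u := ENNReal.toReal_ofReal hu.le

end OTAux
namespace OTAux

/-- Lebesgue measure on (0,1]. -/
def leb01 : Measure ℝ := volume.restrict (Set.Ioc 0 1)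

instance : IsProbabilityMeasure leb01 := by
  constructor
  rw [leb01, Measure.restrict_apply_univ, Real.volume_Ioc]
  norm_num

variable (η : Measure ℝ) [IsProbabilityMeasure η]

lemma aemeasurable_Finv : AEMeasurable (Finv η) leb01 := by
  have hcover : Set.Ioc (0:ℝ) 1 = (⋃ n : ℕ, Set.Icc ((n + 2 : ℝ)⁻¹) (1 - (n + 2 : ℝ)⁻¹)) ∪ {1} := by
    ext u
    simp only [Set.mem_Ioc, Set.mem_union, Set.mem_iUnion, Set.mem_Icc, Set.mem_singleton_iff]
    constructor
    · intro ⟨h0, h1⟩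
      rcases eq_or_lt_of_le h1 with h | h
      · exact Or.inr h
      · left
        obtain ⟨n, hn⟩ := exists_nat_one_div_lt (show (0:ℝ) < min u (1 - u) by
          simp [lt_min_iff]; constructor <;> linarith)
        rw [one_div] at hn
        have hn2 : ((n:ℝ) + 2)⁻¹ ≤ ((n:ℝ) + 1)⁻¹ := by
          apply inv_anti₀ (by positivity) (by linarith)
        refine ⟨n, ?_, ?_⟩
        · have := lt_min_iff.1 hn
          linarith [this.1]
        · have := lt_min_iff.1 hn
          linarith [this.2]
    · rintro (⟨n, hn1, hn2⟩ | h)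
      · have hp : (0:ℝ) < ((n:ℝ) + 2)⁻¹ := by positivity
        constructor <;> linarith
      · simp [h]
  rw [leb01, hcover]
  rw [aemeasurable_union_iff]
  constructor
  · rw [aemeasurable_iUnion_iff]
    intro n
    set ε : ℝ := ((n:ℝ) + 2)⁻¹ with hε
    have hεpos : (0:ℝ) < ε := by positivity
    have hεhalf : ε ≤ 1/2 := by
      rw [hε]
      rw [inv_le_comm₀ (by positivity) (by norm_num)]
      norm_num
    set g : ℝ → ℝ := fun u => Finv η (max ε (min u (1 - ε))) with hg
    have hmem : ∀ u : ℝ, max ε (min u (1 - ε)) ∈ Set.Icc ε (1 - ε) := by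
      intro u
      constructor
      · exact le_max_left _ _
      · apply max_le (by linarith) (min_le_right _ _)
    have hmono : Monotone g := by
      intro a b hab
      have h1 := hmem a
      have h2 := hmem b
      apply Finv_mono (lt_of_lt_of_le hεpos h1.1)
      · exact max_le_max le_rfl (min_le_min hab le_rfl)
      · exact S_nonempty (lt_of_le_of_lt h2.2 (by linarith))
    refine (hmono.measurable.aemeasurable).congr ?_
    have hmm : ∀ᵐ u ∂(volume.restrict (Set.Icc ε (1 - ε))),
        u ∈ Set.Icc ε (1 - ε) := ae_restrict_mem measurableSet_Icc
    filter_upwards [hmm] with u hu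
    rw [hg]
    simp only []
    rw [min_eq_left hu.2, max_eq_right hu.1]
  · have : (volume.restrict ({1} : Set ℝ)) = 0 := by
      rw [Measure.restrict_eq_zero]
      exact Real.volume_singleton
    rw [this]
    exact aemeasurable_zero_measure

lemma map_Finv : leb01.map (Finv η) = η := by
  haveI : IsProbabilityMeasure (leb01.map (Finv η)) :=
    Measure.isProbabilityMeasure_map (aemeasurable_Finv η)
  refine Measure.ext_of_Iic _ _ (fun x => ?_)
  rw [Measure.map_apply_of_aemeasurable (aemeasurable_Finv η) measurableSet_Iic]
  rw [leb01, Measure.restrict_apply' measurableSet_Ioc]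
  have hae : (Finv η ⁻¹' Set.Iic x ∩ Set.Ioc 0 1 : Set ℝ) =ᵐ[volume]
      (Set.Ioc 0 (Fcdf η x) : Set ℝ) := by
    have hsub : ∀ u : ℝ, u ≠ 1 →
        (u ∈ Finv η ⁻¹' Set.Iic x ∩ Set.Ioc 0 1 ↔ u ∈ Set.Ioc 0 (Fcdf η x)) := by
      intro u hu1
      simp only [Set.mem_inter_iff, Set.mem_preimage, Set.mem_Iic, Set.mem_Ioc]
      constructor
      · rintro ⟨hle, h0, h1⟩
        have hlt1 : u < 1 := lt_of_le_of_ne h1 hu1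
        exact ⟨h0, (Finv_le_iff h0 (S_nonempty hlt1)).1 hle⟩
      · rintro ⟨h0, hle⟩
        have h1 : u ≤ 1 := le_trans hle (Fcdf_le_one η x)
        have hlt1 : u < 1 := lt_of_le_of_ne h1 hu1
        exact ⟨(Finv_le_iff h0 (S_nonempty hlt1)).2 hle, h0, h1⟩
    rw [Filter.eventuallyEq_set]
    have h1 : ∀ᵐ u : ℝ ∂volume, u ≠ 1 := by
      rw [ae_iff]
      simpa using Real.volume_singleton (x := 1)
    filter_upwards [h1] with u hu using hsub u hu
  rw [measure_congr hae, Real.volume_Ioc, measure_Iic_eq, sub_zero]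

/-- the quantile coupling. -/
def qc (μ ν : Measure ℝ) : Measure (ℝ × ℝ) :=
  leb01.map (fun u => (Finv μ u, Finv ν u))

variable (μ ν : Measure ℝ) [IsProbabilityMeasure μ] [IsProbabilityMeasure ν]

lemma aemeasurable_qc_pair :
    AEMeasurable (fun u => (Finv μ u, Finv ν u)) leb01 :=
  (aemeasurable_Finv μ).prodMk (aemeasurable_Finv ν)

instance : IsProbabilityMeasure (qc μ ν) :=
  Measure.isProbabilityMeasure_map (aemeasurable_qc_pair μ ν)

lemma qc_fst : (qc μ ν).map Prod.fst = μ := by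
  rw [qc, AEMeasurable.map_map_of_aemeasurable
    (measurable_fst.aemeasurable) (aemeasurable_qc_pair μ ν)]
  exact map_Finv μ

lemma qc_snd : (qc μ ν).map Prod.snd = ν := by
  rw [qc, AEMeasurable.map_map_of_aemeasurable
    (measurable_snd.aemeasurable) (aemeasurable_qc_pair μ ν)]
  exact map_Finv ν

lemma measure_Ioi_eq (s : ℝ) : η (Set.Ioi s) = ENNReal.ofReal (1 - Fcdf η s) := by
  have h := measure_compl (μ := η) (s := Set.Iic s) measurableSet_Iic (measure_ne_top η _)
  rw [Set.compl_Iic] at h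
  rw [h, measure_univ, measure_Iic_eq, ← ENNReal.ofReal_one,
    ← ENNReal.ofReal_sub _ (Fcdf_nonneg η s)]

lemma qc_rect (s t : ℝ) :
    qc μ ν (Set.Ioi s ×ˢ Set.Ioi t) = min (μ (Set.Ioi s)) (ν (Set.Ioi t)) := by
  rw [qc, Measure.map_apply_of_aemeasurable (aemeasurable_qc_pair μ ν)
    (measurableSet_Ioi.prod measurableSet_Ioi)]
  rw [leb01, Measure.restrict_apply' measurableSet_Ioc]
  set a := Fcdf μ s with ha
  set b := Fcdf ν t with hb
  have hae : ((fun u => (Finv μ u, Finv ν u)) ⁻¹' (Set.Ioi s ×ˢ Set.Ioi t) ∩ Set.Ioc 0 1 : Set ℝ)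
      =ᵐ[volume] (Set.Ioc (max a b) 1 : Set ℝ) := by
    have hsub : ∀ u : ℝ, u ≠ 1 →
        (u ∈ (fun u => (Finv μ u, Finv ν u)) ⁻¹' (Set.Ioi s ×ˢ Set.Ioi t) ∩ Set.Ioc 0 1 ↔
          u ∈ Set.Ioc (max a b) 1) := by
      intro u hu1
      simp only [Set.mem_inter_iff, Set.mem_preimage, Set.mem_prod, Set.mem_Ioi, Set.mem_Ioc,
        max_lt_iff]
      constructor
      · rintro ⟨⟨hs', ht'⟩, h0, h1⟩
        have hlt1 : u < 1 := lt_of_le_of_ne h1 hu1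
        exact ⟨⟨(lt_Finv_iff h0 (S_nonempty hlt1)).1 hs',
          (lt_Finv_iff h0 (S_nonempty hlt1)).1 ht'⟩, h1⟩
      · rintro ⟨⟨hs', ht'⟩, h1⟩
        have h0 : 0 < u := lt_of_le_of_lt (Fcdf_nonneg μ s) hs'
        have hlt1 : u < 1 := lt_of_le_of_ne h1 hu1
        exact ⟨⟨(lt_Finv_iff h0 (S_nonempty hlt1)).2 hs',
          (lt_Finv_iff h0 (S_nonempty hlt1)).2 ht'⟩, h0, h1⟩
    rw [Filter.eventuallyEq_set]
    have h1 : ∀ᵐ u : ℝ ∂volume, u ≠ 1 := by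
      rw [ae_iff]
      simpa using Real.volume_singleton (x := 1)
    filter_upwards [h1] with u hu using hsub u hu
  rw [measure_congr hae, Real.volume_Ioc, measure_Ioi_eq μ s, measure_Ioi_eq ν t, ← ha, ← hb]
  rcases le_total a b with h | h
  · rw [max_eq_right h, min_eq_right (ENNReal.ofReal_le_ofReal (by linarith))]
  · rw [max_eq_left h, min_eq_left (ENNReal.ofReal_le_ofReal (by linarith))]

end OTAux
namespace OTAux

/-! ### The kernel `e` -/

def eK (s x : ℝ) : ℝ := (if s < x then 1 else 0) - (if s < 0 then 1 else 0)

lemma eK_eq_pos {x : ℝ} (hx : 0 ≤ x) :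
    (fun s => eK s x) = Set.indicator (Set.Ico 0 x) (1 : ℝ → ℝ) := by
  funext s
  simp only [eK, Set.indicator_apply, Set.mem_Ico]
  by_cases h2 : s < 0
  · rw [if_pos (lt_of_lt_of_le h2 hx), if_pos h2, if_neg (by intro h; linarith [h.1])]
    norm_num
  · rw [if_neg h2]
    push_neg at h2
    by_cases h1 : s < x
    · rw [if_pos h1, if_pos ⟨h2, h1⟩]; norm_num
    · rw [if_neg h1, if_neg (by intro h; exact h1 h.2)]; norm_num

lemma eK_eq_neg {x : ℝ} (hx : x < 0) :
    (fun s => eK s x) = fun s => -Set.indicator (Set.Ico x 0) (1 : ℝ → ℝ) s := by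
  funext s
  simp only [eK, Set.indicator_apply, Set.mem_Ico]
  by_cases h2 : s < 0
  · by_cases h1 : s < x
    · rw [if_pos h1, if_pos h2, if_neg (by intro h; linarith [h.1])]; norm_num
    · push_neg at h1
      rw [if_neg (not_lt.2 h1), if_pos h2, if_pos ⟨h1, h2⟩]; norm_num
  · push_neg at h2
    rw [if_neg (by intro h; linarith), if_neg (not_lt.2 h2),
      if_neg (by intro h; linarith [h.2])]
    norm_num

lemma indicator_Ico_integrable (a b : ℝ) :
    Integrable (Set.indicator (Set.Ico a b) (1 : ℝ → ℝ)) volume := by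
  rw [integrable_indicator_iff measurableSet_Ico]
  exact integrableOn_const (by rw [Real.volume_Ico]; exact ENNReal.ofReal_ne_top)

lemma eK_integrable (x : ℝ) : Integrable (fun s => eK s x) volume := by
  rcases le_or_gt 0 x with hx | hx
  · rw [eK_eq_pos hx]; exact indicator_Ico_integrable 0 x
  · rw [eK_eq_neg hx]; exact (indicator_Ico_integrable x 0).neg

lemma eK_integral (x : ℝ) : ∫ s, eK s x = x := by
  rcases le_or_gt 0 x with hx | hx
  · rw [eK_eq_pos hx, integral_indicator_one measurableSet_Ico, measureReal_def, Real.volume_Ico,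
      ENNReal.toReal_ofReal (by linarith)]
    ring
  · rw [eK_eq_neg hx, integral_neg, integral_indicator_one measurableSet_Ico, measureReal_def, Real.volume_Ico,
      ENNReal.toReal_ofReal (by linarith)]
    ring

lemma eK_abs_integral (x : ℝ) : ∫ s, |eK s x| = |x| := by
  rcases le_or_gt 0 x with hx | hx
  · have h : (fun s => |eK s x|) = Set.indicator (Set.Ico 0 x) (1 : ℝ → ℝ) := by
      funext s
      rw [congrFun (eK_eq_pos hx) s]
      exact abs_of_nonneg (Set.indicator_nonneg (fun _ _ => by norm_num) s)
    rw [h, integral_indicator_one measurableSet_Ico, measureReal_def, Real.volume_Ico,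
      ENNReal.toReal_ofReal (by linarith), abs_of_nonneg hx]
    ring
  · have h : (fun s => |eK s x|) = Set.indicator (Set.Ico x 0) (1 : ℝ → ℝ) := by
      funext s
      rw [congrFun (eK_eq_neg hx) s, abs_neg]
      exact abs_of_nonneg (Set.indicator_nonneg (fun _ _ => by norm_num) s)
    rw [h, integral_indicator_one measurableSet_Ico, measureReal_def, Real.volume_Ico,
      ENNReal.toReal_ofReal (by linarith), abs_of_neg hx]
    ring

lemma eK_measurable_pair : Measurable (fun q : ℝ × ℝ => eK q.1 q.2) := by
  apply Measurable.sub
  · exact Measurable.ite (measurableSet_lt measurable_fst measurable_snd)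
      measurable_const measurable_const
  · exact Measurable.ite (measurableSet_lt measurable_fst measurable_const)
      measurable_const measurable_const

/-! ### couplings -/

variable {μ ν : Measure ℝ} [IsProbabilityMeasure μ] [IsProbabilityMeasure ν]
  {π : Measure (ℝ × ℝ)}

lemma coupling_prob (hπ : IsCouplingR π μ ν) : IsProbabilityMeasure π := by
  constructor
  have h : π.map Prod.fst Set.univ = μ Set.univ := by rw [hπ.1]
  rw [Measure.map_apply measurable_fst MeasurableSet.univ, Set.preimage_univ] at h
  rw [h]
  exact measure_univ

lemma coupling_fst_apply (hπ : IsCouplingR π μ ν) {s : Set ℝ} (hs : MeasurableSet s) :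
    π (Prod.fst ⁻¹' s) = μ s := by
  rw [← hπ.1, Measure.map_apply measurable_fst hs]

lemma coupling_snd_apply (hπ : IsCouplingR π μ ν) {s : Set ℝ} (hs : MeasurableSet s) :
    π (Prod.snd ⁻¹' s) = ν s := by
  rw [← hπ.2, Measure.map_apply measurable_snd hs]

lemma frechet (hπ : IsCouplingR π μ ν) (s t : ℝ) :
    π (Set.Ioi s ×ˢ Set.Ioi t) ≤ min (μ (Set.Ioi s)) (ν (Set.Ioi t)) := by
  refine le_min ?_ ?_
  · calc π (Set.Ioi s ×ˢ Set.Ioi t) ≤ π (Prod.fst ⁻¹' Set.Ioi s) :=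
        measure_mono (fun p hp => hp.1)
      _ = μ (Set.Ioi s) := coupling_fst_apply hπ measurableSet_Ioi
  · calc π (Set.Ioi s ×ˢ Set.Ioi t) ≤ π (Prod.snd ⁻¹' Set.Ioi t) :=
        measure_mono (fun p hp => hp.2)
      _ = ν (Set.Ioi t) := coupling_snd_apply hπ measurableSet_Ioi

lemma int_fst_sq (hπ : IsCouplingR π μ ν) (hμ2 : FiniteSecondMomentR μ) :
    Integrable (fun p : ℝ × ℝ => p.1 ^ 2) π := by
  have h : Integrable (fun x : ℝ => x ^ 2) (π.map Prod.fst) := by rw [hπ.1]; exact hμ2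
  exact (integrable_map_measure ((measurable_id.pow_const 2).aestronglyMeasurable)
    measurable_fst.aemeasurable).1 h

lemma int_snd_sq (hπ : IsCouplingR π μ ν) (hν2 : FiniteSecondMomentR ν) :
    Integrable (fun p : ℝ × ℝ => p.2 ^ 2) π := by
  have h : Integrable (fun x : ℝ => x ^ 2) (π.map Prod.snd) := by rw [hπ.2]; exact hν2
  exact (integrable_map_measure ((measurable_id.pow_const 2).aestronglyMeasurable)
    measurable_snd.aemeasurable).1 h

lemma int_mul (hπ : IsCouplingR π μ ν) (hμ2 : FiniteSecondMomentR μ)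
    (hν2 : FiniteSecondMomentR ν) : Integrable (fun p : ℝ × ℝ => p.1 * p.2) π := by
  refine Integrable.mono' ((int_fst_sq hπ hμ2).add (int_snd_sq hπ hν2))
    ((measurable_fst.mul measurable_snd).aestronglyMeasurable) (ae_of_all _ (fun p => ?_))
  simp only [Pi.add_apply]
  rw [Real.norm_eq_abs, abs_mul]
  nlinarith [abs_nonneg p.1, abs_nonneg p.2, sq_abs p.1, sq_abs p.2,
    sq_nonneg (|p.1| - |p.2|), mul_nonneg (abs_nonneg p.1) (abs_nonneg p.2)]

/-! ### the function G -/

def Gfun (μ ν : Measure ℝ) (π : Measure (ℝ × ℝ)) (q : ℝ × ℝ) : ℝ :=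
  (π (Set.Ioi q.1 ×ˢ Set.Ioi q.2)).toReal
    - (if q.2 < 0 then 1 else 0) * (μ (Set.Ioi q.1)).toReal
    - (if q.1 < 0 then 1 else 0) * (ν (Set.Ioi q.2)).toReal
    + (if q.1 < 0 then 1 else 0) * (if q.2 < 0 then 1 else 0)

lemma pi_integral (hπ : IsCouplingR π μ ν) (q : ℝ × ℝ) :
    ∫ p : ℝ × ℝ, eK q.1 p.1 * eK q.2 p.2 ∂π = Gfun μ ν π q := by
  haveI := coupling_prob hπ
  have hrect : MeasurableSet (Set.Ioi q.1 ×ˢ Set.Ioi q.2) :=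
    measurableSet_Ioi.prod measurableSet_Ioi
  have hfst : MeasurableSet (Prod.fst ⁻¹' Set.Ioi q.1 : Set (ℝ × ℝ)) :=
    measurable_fst measurableSet_Ioi
  have hsnd : MeasurableSet (Prod.snd ⁻¹' Set.Ioi q.2 : Set (ℝ × ℝ)) :=
    measurable_snd measurableSet_Ioi
  have hexp : (fun p : ℝ × ℝ => eK q.1 p.1 * eK q.2 p.2) = fun p =>
      Set.indicator (Set.Ioi q.1 ×ˢ Set.Ioi q.2) (1 : ℝ × ℝ → ℝ) p
      - (if q.2 < 0 then 1 else 0) * Set.indicator (Prod.fst ⁻¹' Set.Ioi q.1)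
          (1 : ℝ × ℝ → ℝ) p
      - (if q.1 < 0 then 1 else 0) * Set.indicator (Prod.snd ⁻¹' Set.Ioi q.2)
          (1 : ℝ × ℝ → ℝ) p
      + (if q.1 < 0 then 1 else 0) * (if q.2 < 0 then 1 else 0) := by
    funext p
    simp only [eK, Set.indicator_apply, Set.mem_prod, Set.mem_preimage, Set.mem_Ioi]
    by_cases h1 : q.1 < p.1 <;> by_cases h2 : q.2 < p.2 <;>
      by_cases h3 : q.1 < 0 <;> by_cases h4 : q.2 < 0 <;>
      simp [h1, h2, h3, h4] <;> ring
  have i1 : Integrable (fun p : ℝ × ℝ =>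
      Set.indicator (Set.Ioi q.1 ×ˢ Set.Ioi q.2) (1 : ℝ × ℝ → ℝ) p) π :=
    (integrable_const (1:ℝ)).indicator hrect
  have i2 : Integrable (fun p => (if q.2 < 0 then (1:ℝ) else 0) *
      Set.indicator (Prod.fst ⁻¹' Set.Ioi q.1) (1 : ℝ × ℝ → ℝ) p) π :=
    ((integrable_const (1:ℝ)).indicator hfst).const_mul _
  have i3 : Integrable (fun p => (if q.1 < 0 then (1:ℝ) else 0) *
      Set.indicator (Prod.snd ⁻¹' Set.Ioi q.2) (1 : ℝ × ℝ → ℝ) p) π :=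
    ((integrable_const (1:ℝ)).indicator hsnd).const_mul _
  have i12 : Integrable (fun p : ℝ × ℝ =>
      Set.indicator (Set.Ioi q.1 ×ˢ Set.Ioi q.2) (1 : ℝ × ℝ → ℝ) p
      - (if q.2 < 0 then (1:ℝ) else 0) * Set.indicator (Prod.fst ⁻¹' Set.Ioi q.1)
          (1 : ℝ × ℝ → ℝ) p) π := i1.sub i2
  have i123 : Integrable (fun p : ℝ × ℝ =>
      Set.indicator (Set.Ioi q.1 ×ˢ Set.Ioi q.2) (1 : ℝ × ℝ → ℝ) p
      - (if q.2 < 0 then (1:ℝ) else 0) * Set.indicator (Prod.fst ⁻¹' Set.Ioi q.1)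
          (1 : ℝ × ℝ → ℝ) p
      - (if q.1 < 0 then (1:ℝ) else 0) * Set.indicator (Prod.snd ⁻¹' Set.Ioi q.2)
          (1 : ℝ × ℝ → ℝ) p) π := i12.sub i3
  rw [hexp, integral_add i123 (integrable_const _),
    integral_sub i12 i3, integral_sub i1 i2, integral_const_mul _ _,
    integral_const_mul _ _, integral_indicator_one hrect, integral_indicator_one hfst,
    integral_indicator_one hsnd, integral_const, measureReal_def, measureReal_def,
    measureReal_def, coupling_fst_apply hπ measurableSet_Ioi,
    coupling_snd_apply hπ measurableSet_Ioi]
  simp [Gfun, measure_univ]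

lemma uncurry_integrable (hπ : IsCouplingR π μ ν) (hμ2 : FiniteSecondMomentR μ)
    (hν2 : FiniteSecondMomentR ν) :
    Integrable (Function.uncurry fun (p q : ℝ × ℝ) => eK q.1 p.1 * eK q.2 p.2)
      (π.prod (volume : Measure (ℝ × ℝ))) := by
  haveI := coupling_prob hπ
  have hmeas : AEStronglyMeasurable
      (Function.uncurry fun (p q : ℝ × ℝ) => eK q.1 p.1 * eK q.2 p.2)
      (π.prod (volume : Measure (ℝ × ℝ))) := by
    apply Measurable.aestronglyMeasurable
    exact (eK_measurable_pair.comp (measurable_snd.fst.prodMk measurable_fst.fst)).mul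
      (eK_measurable_pair.comp (measurable_snd.snd.prodMk measurable_fst.snd))
  rw [integrable_prod_iff hmeas]
  constructor
  · refine ae_of_all _ (fun p => ?_)
    show Integrable (fun q : ℝ × ℝ => eK q.1 p.1 * eK q.2 p.2) volume
    rw [Measure.volume_eq_prod]
    exact (eK_integrable p.1).mul_prod (eK_integrable p.2)
  · have h : (fun p : ℝ × ℝ => ∫ q : ℝ × ℝ, ‖eK q.1 p.1 * eK q.2 p.2‖)
        = fun p => |p.1| * |p.2| := by
      funext p
      rw [Measure.volume_eq_prod]
      calc ∫ q : ℝ × ℝ, ‖eK q.1 p.1 * eK q.2 p.2‖ ∂(volume.prod volume)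
          = ∫ q : ℝ × ℝ, |eK q.1 p.1| * |eK q.2 p.2| ∂(volume.prod volume) := by
            congr 1; funext q; rw [Real.norm_eq_abs, abs_mul]
        _ = (∫ s, |eK s p.1|) * (∫ t, |eK t p.2|) :=
            integral_prod_mul (fun s => |eK s p.1|) (fun t => |eK t p.2|)
        _ = |p.1| * |p.2| := by rw [eK_abs_integral, eK_abs_integral]
    simp only [Function.uncurry_apply_pair]
    rw [h]
    have habs := (int_mul hπ hμ2 hν2).abs
    refine habs.congr (ae_of_all _ (fun p => ?_))
    exact abs_mul _ _

lemma J_eq (hπ : IsCouplingR π μ ν) (hμ2 : FiniteSecondMomentR μ)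
    (hν2 : FiniteSecondMomentR ν) :
    ∫ p : ℝ × ℝ, p.1 * p.2 ∂π = ∫ q : ℝ × ℝ, Gfun μ ν π q ∂volume := by
  haveI := coupling_prob hπ
  have hxy : ∀ p : ℝ × ℝ, p.1 * p.2 = ∫ q : ℝ × ℝ, eK q.1 p.1 * eK q.2 p.2 ∂volume := by
    intro p
    rw [Measure.volume_eq_prod,
      integral_prod_mul (f := fun s => eK s p.1) (g := fun t => eK t p.2),
      eK_integral, eK_integral]
  calc ∫ p : ℝ × ℝ, p.1 * p.2 ∂π
      = ∫ p : ℝ × ℝ, ∫ q : ℝ × ℝ, eK q.1 p.1 * eK q.2 p.2 ∂volume ∂π := by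
        exact integral_congr_ae (ae_of_all _ hxy)
    _ = ∫ q : ℝ × ℝ, ∫ p : ℝ × ℝ, eK q.1 p.1 * eK q.2 p.2 ∂π ∂volume :=
        integral_integral_swap (uncurry_integrable hπ hμ2 hν2)
    _ = ∫ q : ℝ × ℝ, Gfun μ ν π q ∂volume :=
        integral_congr_ae (ae_of_all _ (pi_integral hπ))

lemma G_integrable (hπ : IsCouplingR π μ ν) (hμ2 : FiniteSecondMomentR μ)
    (hν2 : FiniteSecondMomentR ν) :
    Integrable (Gfun μ ν π) (volume : Measure (ℝ × ℝ)) := by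
  haveI := coupling_prob hπ
  have h := (uncurry_integrable hπ hμ2 hν2).integral_prod_right
  have heq : ∀ q : ℝ × ℝ, (∫ p : ℝ × ℝ,
      (Function.uncurry fun (p q : ℝ × ℝ) => eK q.1 p.1 * eK q.2 p.2) (p, q) ∂π)
      = Gfun μ ν π q := by
    intro q
    simp only [Function.uncurry_apply_pair]
    exact pi_integral hπ q
  exact h.congr (ae_of_all _ heq)

lemma cost_eq (hπ : IsCouplingR π μ ν) (hμ2 : FiniteSecondMomentR μ)
    (hν2 : FiniteSecondMomentR ν) :
    costR π = (∫ x, x ^ 2 ∂μ) + (∫ y, y ^ 2 ∂ν) - 2 * ∫ p : ℝ × ℝ, p.1 * p.2 ∂π := by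
  haveI := coupling_prob hπ
  have h1 : (fun p : ℝ × ℝ => (p.2 - p.1) ^ 2)
      = fun p : ℝ × ℝ => (p.1 ^ 2 + p.2 ^ 2) - 2 * (p.1 * p.2) := by
    funext p; ring
  have h2 : ∫ p : ℝ × ℝ, p.1 ^ 2 ∂π = ∫ x, x ^ 2 ∂μ := by
    rw [← hπ.1, integral_map (φ := Prod.fst) measurable_fst.aemeasurable
      (f := fun x : ℝ => x ^ 2) ((measurable_id.pow_const 2).aestronglyMeasurable)]
  have h3 : ∫ p : ℝ × ℝ, p.2 ^ 2 ∂π = ∫ y, y ^ 2 ∂ν := by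
    rw [← hπ.2, integral_map (φ := Prod.snd) measurable_snd.aemeasurable
      (f := fun y : ℝ => y ^ 2) ((measurable_id.pow_const 2).aestronglyMeasurable)]
  have iadd : Integrable (fun p : ℝ × ℝ => p.1 ^ 2 + p.2 ^ 2) π :=
    (int_fst_sq hπ hμ2).add (int_snd_sq hπ hν2)
  have i2mul : Integrable (fun p : ℝ × ℝ => 2 * (p.1 * p.2)) π :=
    (int_mul hπ hμ2 hν2).const_mul 2
  rw [costR, h1, integral_sub iadd i2mul,
    integral_add (int_fst_sq hπ hμ2) (int_snd_sq hπ hν2), integral_const_mul _ _, h2, h3]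

end OTAux
namespace OTAux

variable {μ ν : Measure ℝ} [IsProbabilityMeasure μ] [IsProbabilityMeasure ν]
  {π : Measure (ℝ × ℝ)}

lemma qc_coupling : IsCouplingR (qc μ ν) μ ν := ⟨qc_fst μ ν, qc_snd μ ν⟩

lemma Gdiff_nonneg (hπ : IsCouplingR π μ ν) (q : ℝ × ℝ) :
    0 ≤ Gfun μ ν (qc μ ν) q - Gfun μ ν π q := by
  have h1 := frechet hπ q.1 q.2
  have h2 : qc μ ν (Set.Ioi q.1 ×ˢ Set.Ioi q.2) = min (μ (Set.Ioi q.1)) (ν (Set.Ioi q.2)) :=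
    qc_rect μ ν q.1 q.2
  have h3 : (π (Set.Ioi q.1 ×ˢ Set.Ioi q.2)).toReal
      ≤ (qc μ ν (Set.Ioi q.1 ×ˢ Set.Ioi q.2)).toReal := by
    rw [h2]
    exact ENNReal.toReal_mono
      (ne_of_lt (lt_of_le_of_lt (min_le_left _ _) (measure_lt_top μ _))) h1
  simp only [Gfun]
  linarith

lemma cost_sub (hπ : IsCouplingR π μ ν) (hμ2 : FiniteSecondMomentR μ)
    (hν2 : FiniteSecondMomentR ν) :
    costR π - costR (qc μ ν)
      = 2 * ∫ q : ℝ × ℝ, (Gfun μ ν (qc μ ν) q - Gfun μ ν π q) ∂volume := by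
  rw [cost_eq hπ hμ2 hν2, cost_eq qc_coupling hμ2 hν2,
    integral_sub (G_integrable qc_coupling hμ2 hν2) (G_integrable hπ hμ2 hν2),
    J_eq hπ hμ2 hν2, J_eq qc_coupling hμ2 hν2]
  ring

/-- rectangles determine finite measures on ℝ². -/
lemma ext_of_rect_ae {π₁ π₂ : Measure (ℝ × ℝ)} [IsProbabilityMeasure π₁]
    [IsProbabilityMeasure π₂]
    (h : ∀ᵐ q : ℝ × ℝ ∂volume, π₁ (Set.Ioi q.1 ×ˢ Set.Ioi q.2)
      = π₂ (Set.Ioi q.1 ×ˢ Set.Ioi q.2)) : π₁ = π₂ := by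
  have hle : ∀ (ρ σ : Measure (ℝ × ℝ)),
      (∀ᵐ q : ℝ × ℝ ∂volume, ρ (Set.Ioi q.1 ×ˢ Set.Ioi q.2)
        = σ (Set.Ioi q.1 ×ˢ Set.Ioi q.2)) →
      ∀ s t : ℝ, ρ (Set.Ioi s ×ˢ Set.Ioi t) ≤ σ (Set.Ioi s ×ˢ Set.Ioi t) := by
    intro ρ σ hae s t
    rw [ae_iff] at hae
    set N := {q : ℝ × ℝ | ¬ ρ (Set.Ioi q.1 ×ˢ Set.Ioi q.2)
      = σ (Set.Ioi q.1 ×ˢ Set.Ioi q.2)} with hN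
    have hmono : Monotone (fun n : ℕ =>
        Set.Ioi (s + ((n:ℝ) + 1)⁻¹) ×ˢ Set.Ioi (t + ((n:ℝ) + 1)⁻¹)) := by
      intro a b hab
      have hba : ((b:ℝ) + 1)⁻¹ ≤ ((a:ℝ) + 1)⁻¹ :=
        inv_anti₀ (by positivity) (by exact_mod_cast by linarith)
      exact Set.prod_mono (Set.Ioi_subset_Ioi (by linarith))
        (Set.Ioi_subset_Ioi (by linarith))
    have hunion : (⋃ n : ℕ, Set.Ioi (s + ((n:ℝ) + 1)⁻¹) ×ˢ Set.Ioi (t + ((n:ℝ) + 1)⁻¹))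
        = Set.Ioi s ×ˢ Set.Ioi t := by
      ext p
      simp only [Set.mem_iUnion, Set.mem_prod, Set.mem_Ioi]
      constructor
      · rintro ⟨n, h1, h2⟩
        have hp : (0:ℝ) < ((n:ℝ) + 1)⁻¹ := by positivity
        exact ⟨by linarith, by linarith⟩
      · rintro ⟨h1, h2⟩
        obtain ⟨n, hn⟩ := exists_nat_one_div_lt
          (show (0:ℝ) < min (p.1 - s) (p.2 - t) by simp [lt_min_iff]; constructor <;> linarith)
        rw [one_div, lt_min_iff] at hn
        exact ⟨n, by linarith [hn.1], by linarith [hn.2]⟩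
    calc ρ (Set.Ioi s ×ˢ Set.Ioi t)
        = ⨆ n : ℕ, ρ (Set.Ioi (s + ((n:ℝ) + 1)⁻¹) ×ˢ Set.Ioi (t + ((n:ℝ) + 1)⁻¹)) := by
          rw [← hunion, hmono.directed_le.measure_iUnion]
      _ ≤ σ (Set.Ioi s ×ˢ Set.Ioi t) := by
          refine iSup_le (fun n => ?_)
          set ε : ℝ := ((n:ℝ) + 1)⁻¹ with hε
          have hεpos : (0:ℝ) < ε := by positivity
          have hbox : (volume : Measure (ℝ × ℝ)) (Set.Ioo s (s + ε) ×ˢ Set.Ioo t (t + ε)) ≠ 0 := by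
            rw [Measure.volume_eq_prod, Measure.prod_prod, Real.volume_Ioo, Real.volume_Ioo]
            simp only [add_sub_cancel_left]
            have hp : ENNReal.ofReal ε ≠ 0 := (ENNReal.ofReal_pos.2 hεpos).ne'
            exact mul_ne_zero hp hp
          have hq : ∃ q ∈ Set.Ioo s (s + ε) ×ˢ Set.Ioo t (t + ε), q ∉ N := by
            by_contra hcon
            push_neg at hcon
            exact hbox (measure_mono_null hcon hae)
          obtain ⟨q, hqbox, hqN⟩ := hq
          simp only [Set.mem_prod, Set.mem_Ioo] at hqbox
          have hqeq : ρ (Set.Ioi q.1 ×ˢ Set.Ioi q.2) = σ (Set.Ioi q.1 ×ˢ Set.Ioi q.2) := by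
            by_contra hcon
            exact hqN hcon
          calc ρ (Set.Ioi (s + ε) ×ˢ Set.Ioi (t + ε))
              ≤ ρ (Set.Ioi q.1 ×ˢ Set.Ioi q.2) :=
                measure_mono (Set.prod_mono (Set.Ioi_subset_Ioi hqbox.1.2.le)
                  (Set.Ioi_subset_Ioi hqbox.2.2.le))
            _ = σ (Set.Ioi q.1 ×ˢ Set.Ioi q.2) := hqeq
            _ ≤ σ (Set.Ioi s ×ˢ Set.Ioi t) :=
                measure_mono (Set.prod_mono (Set.Ioi_subset_Ioi hqbox.1.1.le)
                  (Set.Ioi_subset_Ioi hqbox.2.1.le))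
  have heq : ∀ s t : ℝ, π₁ (Set.Ioi s ×ˢ Set.Ioi t) = π₂ (Set.Ioi s ×ˢ Set.Ioi t) :=
    fun s t => le_antisymm (hle π₁ π₂ h s t)
      (hle π₂ π₁ (h.mono fun q hq => hq.symm) s t)
  have hsp : IsCountablySpanning (Set.range (Set.Ioi : ℝ → Set ℝ)) := by
    refine ⟨fun n => Set.Ioi (-(n:ℝ)), fun n => ⟨_, rfl⟩, ?_⟩
    ext x
    simp only [Set.mem_iUnion, Set.mem_Ioi, Set.mem_univ, iff_true]
    obtain ⟨n, hn⟩ := exists_nat_gt (-x)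
    exact ⟨n, by linarith⟩
  have h1 : (Real.measurableSpace : MeasurableSpace ℝ)
      = MeasurableSpace.generateFrom (Set.range (Set.Ioi : ℝ → Set ℝ)) := by
    rw [BorelSpace.measurable_eq (α := ℝ)]
    exact borel_eq_generateFrom_Ioi ℝ
  have hgen : (Prod.instMeasurableSpace : MeasurableSpace (ℝ × ℝ))
      = MeasurableSpace.generateFrom
        (Set.image2 (· ×ˢ ·) (Set.range (Set.Ioi : ℝ → Set ℝ))
          (Set.range (Set.Ioi : ℝ → Set ℝ))) := by
    conv_lhs => rw [show (Prod.instMeasurableSpace : MeasurableSpace (ℝ × ℝ))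
      = @Prod.instMeasurableSpace ℝ ℝ Real.measurableSpace Real.measurableSpace from rfl]
    rw [h1]
    exact generateFrom_prod_eq hsp hsp
  refine MeasureTheory.ext_of_generate_finite _ hgen ?_ ?_ ?_
  · rintro S hS T hT -
    simp only [Set.mem_image2, Set.mem_range] at hS hT ⊢
    obtain ⟨S1, ⟨a, rfl⟩, S2, ⟨b, rfl⟩, rfl⟩ := hS
    obtain ⟨T1, ⟨c, rfl⟩, T2, ⟨d, rfl⟩, rfl⟩ := hT
    refine ⟨Set.Ioi (max a c), ⟨max a c, rfl⟩, Set.Ioi (max b d), ⟨max b d, rfl⟩, ?_⟩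
    rw [Set.prod_inter_prod, Set.Ioi_inter_Ioi, Set.Ioi_inter_Ioi]
  · rintro S hS
    simp only [Set.mem_image2, Set.mem_range] at hS
    obtain ⟨S1, ⟨a, rfl⟩, S2, ⟨b, rfl⟩, rfl⟩ := hS
    exact heq a b
  · simp [measure_univ]

theorem optimal_set_eq (hμ2 : FiniteSecondMomentR μ) (hν2 : FiniteSecondMomentR ν) :
    {π : Measure (ℝ × ℝ) | IsOptimalCouplingR π μ ν} = {qc μ ν} := by
  have hle : ∀ π : Measure (ℝ × ℝ), IsCouplingR π μ ν → costR (qc μ ν) ≤ costR π := by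
    intro π hπ
    have hd := cost_sub hπ hμ2 hν2
    have hnn : 0 ≤ ∫ q : ℝ × ℝ, (Gfun μ ν (qc μ ν) q - Gfun μ ν π q) ∂volume :=
      integral_nonneg (Gdiff_nonneg hπ)
    linarith
  have hW : W2sqR μ ν = costR (qc μ ν) := by
    rw [W2sqR]
    apply le_antisymm
    · refine csInf_le ⟨costR (qc μ ν), ?_⟩ ⟨qc μ ν, qc_coupling, rfl⟩
      rintro c ⟨π, hπ, rfl⟩
      exact hle π hπ
    · refine le_csInf ⟨_, ⟨qc μ ν, qc_coupling, rfl⟩⟩ ?_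
      rintro c ⟨π, hπ, rfl⟩
      exact hle π hπ
  ext π
  simp only [Set.mem_setOf_eq, Set.mem_singleton_iff, IsOptimalCouplingR]
  constructor
  · rintro ⟨hπ, hcost⟩
    haveI := coupling_prob hπ
    have h0 : ∫ q : ℝ × ℝ, (Gfun μ ν (qc μ ν) q - Gfun μ ν π q) ∂volume = 0 := by
      have hd := cost_sub hπ hμ2 hν2
      rw [hcost, hW] at hd
      linarith
    have hint : Integrable (fun q : ℝ × ℝ => Gfun μ ν (qc μ ν) q - Gfun μ ν π q) volume :=
      (G_integrable qc_coupling hμ2 hν2).sub (G_integrable hπ hμ2 hν2)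
    have hae0 : (fun q : ℝ × ℝ => Gfun μ ν (qc μ ν) q - Gfun μ ν π q) =ᵐ[volume] 0 :=
      (integral_eq_zero_iff_of_nonneg (Gdiff_nonneg hπ) hint).1 h0
    have haerect : ∀ᵐ q : ℝ × ℝ ∂volume,
        π (Set.Ioi q.1 ×ˢ Set.Ioi q.2) = qc μ ν (Set.Ioi q.1 ×ˢ Set.Ioi q.2) := by
      filter_upwards [hae0] with q hq
      have hq' : Gfun μ ν (qc μ ν) q = Gfun μ ν π q := by
        have : Gfun μ ν (qc μ ν) q - Gfun μ ν π q = 0 := hq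
        linarith
      have htr : (π (Set.Ioi q.1 ×ˢ Set.Ioi q.2)).toReal
          = (qc μ ν (Set.Ioi q.1 ×ˢ Set.Ioi q.2)).toReal := by
        simp only [Gfun] at hq'
        linarith
      exact (ENNReal.toReal_eq_toReal_iff' (measure_ne_top π _) (measure_ne_top (qc μ ν) _)).1 htr
    exact ext_of_rect_ae haerect
  · rintro rfl
    exact ⟨qc_coupling, hW.symm⟩

end OTAux
namespace OTAux

lemma measurableSet_of_isLowerSet {s : Set ℝ} (hs : IsLowerSet s) : MeasurableSet s := by
  rcases Set.eq_empty_or_nonempty s with rfl | hne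
  · exact MeasurableSet.empty
  by_cases hb : BddAbove s
  · set a := sSup s with ha
    have hsub : Set.Iio a ⊆ s := by
      intro x hx
      obtain ⟨y, hy, hxy⟩ := exists_lt_of_lt_csSup hne hx
      exact hs hxy.le hy
    have hsub2 : s ⊆ Set.Iic a := fun x hx => le_csSup hb hx
    by_cases hmem : a ∈ s
    · have h : s = Set.Iic a := by
        refine Set.Subset.antisymm hsub2 (fun x hx => ?_)
        rcases lt_or_eq_of_le (Set.mem_Iic.1 hx) with h | h
        · exact hsub h
        · rw [h]; exact hmem
      rw [h]; exact measurableSet_Iic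
    · have h : s = Set.Iio a := by
        refine Set.Subset.antisymm (fun x hx => ?_) hsub
        refine lt_of_le_of_ne (Set.mem_Iic.1 (hsub2 hx)) (fun h => hmem ?_)
        rw [← h]; exact hx
      rw [h]; exact measurableSet_Iio
  · have h : s = Set.univ := by
      ext x
      simp only [Set.mem_univ, iff_true]
      obtain ⟨y, hy, hxy⟩ := not_bddAbove_iff.1 hb x
      exact hs hxy.le hy
    rw [h]; exact MeasurableSet.univ

variable (μ ν : Measure ℝ) [IsProbabilityMeasure μ] [IsProbabilityMeasure ν]

lemma measurable_T : Measurable (fun x => Finv ν (Fcdf μ x)) := by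
  set T := fun x => Finv ν (Fcdf μ x) with hTdef
  set L : Set ℝ := {x | Fcdf μ x ≤ 0} with hLdef
  set U : Set ℝ := {x | ∀ y : ℝ, Fcdf ν y < Fcdf μ x} with hUdef
  have hLlower : IsLowerSet L := fun a b hba ha => le_trans (Fcdf_mono μ hba) ha
  have hUupper : IsUpperSet U := fun a b hab ha y => lt_of_lt_of_le (ha y) (Fcdf_mono μ hab)
  have hLmeas : MeasurableSet L := measurableSet_of_isLowerSet hLlower
  have hUmeas : MeasurableSet U := by
    have h := (measurableSet_of_isLowerSet hUupper.compl).compl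
    rwa [compl_compl] at h
  have hmonoM : ∀ a b : ℝ, a ≤ b → a ∉ L → b ∉ L → b ∉ U → T a ≤ T b := by
    intro a b hab haL hbL hbU
    simp only [hLdef, hUdef, Set.mem_setOf_eq, not_le, not_forall, not_lt] at haL hbL hbU
    obtain ⟨y, hy⟩ := hbU
    exact Finv_mono haL (Fcdf_mono μ hab) ⟨y, hy⟩
  have hTL : ∀ x ∈ L, T x = 0 := by
    intro x hx
    have h : {z : ℝ | Fcdf μ x ≤ Fcdf ν z} = Set.univ := by
      ext z
      simp only [Set.mem_setOf_eq, Set.mem_univ, iff_true]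
      exact le_trans hx (Fcdf_nonneg ν z)
    show Finv ν (Fcdf μ x) = 0
    rw [show Finv ν (Fcdf μ x) = sInf {z : ℝ | Fcdf μ x ≤ Fcdf ν z} from rfl, h]
    exact Real.sInf_of_not_bddBelow (by simp [BddBelow, Set.Nonempty, lowerBounds]; intro x; exact ⟨x - 1, by linarith⟩)
  have hTU : ∀ x ∈ U, T x = 0 := by
    intro x hx
    have h : {z : ℝ | Fcdf μ x ≤ Fcdf ν z} = ∅ := by
      ext z
      simp only [Set.mem_setOf_eq, Set.mem_empty_iff_false, iff_false, not_le]
      exact hx z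
    show Finv ν (Fcdf μ x) = 0
    rw [show Finv ν (Fcdf μ x) = sInf {z : ℝ | Fcdf μ x ≤ Fcdf ν z} from rfl, h]
    exact Real.sInf_empty
  have hdisjLU : ∀ x : ℝ, x ∈ L → x ∈ U → False := by
    intro x hxL hxU
    exact absurd (lt_of_lt_of_le (hxU 0) hxL) (not_lt.2 (Fcdf_nonneg ν 0))
  apply measurable_of_Iic
  intro c
  have hlowc : IsLowerSet (L ∪ {x | x ∉ L ∧ x ∉ U ∧ T x ≤ c}) := by
    intro a b hba ha
    by_cases hbL : b ∈ L
    · exact Or.inl hbL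
    rcases ha with h | h
    · exact absurd (hLlower hba h) hbL
    · have hbU : b ∉ U := fun hb => h.2.1 (hUupper hba hb)
      exact Or.inr ⟨hbL, hbU, le_trans (hmonoM b a hba hbL h.1 h.2.1) h.2.2⟩
  have hmidmeas : MeasurableSet {x | x ∉ L ∧ x ∉ U ∧ T x ≤ c} := by
    have h : {x | x ∉ L ∧ x ∉ U ∧ T x ≤ c}
        = (L ∪ {x | x ∉ L ∧ x ∉ U ∧ T x ≤ c}) \ L := by
      ext x
      simp only [Set.mem_diff, Set.mem_union, Set.mem_setOf_eq]
      constructor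
      · intro hx
        exact ⟨Or.inr hx, hx.1⟩
      · rintro ⟨h | h, hnl⟩
        · exact absurd h hnl
        · exact h
    rw [h]
    exact (measurableSet_of_isLowerSet hlowc).diff hLmeas
  by_cases hc : 0 ≤ c
  · have h : T ⁻¹' Set.Iic c = ({x | x ∉ L ∧ x ∉ U ∧ T x ≤ c} ∪ L) ∪ U := by
      ext x
      simp only [Set.mem_preimage, Set.mem_Iic, Set.mem_union, Set.mem_setOf_eq]
      constructor
      · intro hx
        by_cases hL : x ∈ L
        · exact Or.inl (Or.inr hL)
        by_cases hU : x ∈ U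
        · exact Or.inr hU
        · exact Or.inl (Or.inl ⟨hL, hU, hx⟩)
      · rintro ((h | h) | h)
        · exact h.2.2
        · rw [hTL x h]; exact hc
        · rw [hTU x h]; exact hc
    rw [h]
    exact (hmidmeas.union hLmeas).union hUmeas
  · have h : T ⁻¹' Set.Iic c = {x | x ∉ L ∧ x ∉ U ∧ T x ≤ c} := by
      ext x
      simp only [Set.mem_preimage, Set.mem_Iic, Set.mem_setOf_eq]
      constructor
      · intro hx
        have hL : x ∉ L := by
          intro hxL
          rw [hTL x hxL] at hx
          linarith
        have hU : x ∉ U := by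
          intro hxU
          rw [hTU x hxU] at hx
          linarith
        exact ⟨hL, hU, hx⟩
      · intro hx
        exact hx.2.2
    rw [h]
    exact hmidmeas

lemma qc_eq_map
    (hcond : ∀ x : ℝ, 0 < μ {x} → ∀ u ∈ Set.Ioc (Fleft μ x) (Fcdf μ x),
      Finv ν u = Finv ν (Fcdf μ x)) :
    qc μ ν = givenByMapR μ (fun x => Finv ν (Fcdf μ x)) := by
  have hT : Measurable (fun x => Finv ν (Fcdf μ x)) := measurable_T μ ν
  have hstep : ∀ T' : ℝ → ℝ, Measurable T' →
      Measure.map (fun x => (x, T' x)) μ = leb01.map (fun u => (Finv μ u, T' (Finv μ u))) := by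
    intro T' hT'
    conv_lhs => rw [← map_Finv μ]
    rw [AEMeasurable.map_map_of_aemeasurable
      ((show Measurable fun x : ℝ => (x, T' x) from measurable_id.prodMk hT').aemeasurable)
      (aemeasurable_Finv μ)]
    rfl
  rw [givenByMapR, hstep _ hT, qc]
  apply Measure.map_congr
  -- a.e. u : (Finv μ u, Finv ν u) = (Finv μ u, Finv ν (Fcdf μ (Finv μ u)))
  set A : Set ℝ := {x : ℝ | 0 < μ {x}} with hA
  have hAc : A.Countable := by
    have h := Measure.countable_meas_level_set_pos (μ := μ) (g := fun x : ℝ => x) measurable_id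
    simpa [Set.setOf_eq_eq_singleton] using h
  set E : Set ℝ := (Fleft μ '' A) ∪ {1} with hE
  have hEc : E.Countable := (hAc.image _).union (Set.countable_singleton 1)
  have hE0 : leb01 E = 0 := by
    rw [leb01, Measure.restrict_apply' measurableSet_Ioc]
    exact measure_mono_null Set.inter_subset_left (hEc.measure_zero volume)
  have hae : ∀ᵐ u ∂leb01, u ∉ E := by
    rw [ae_iff]
    simpa using hE0
  have haeIoc : ∀ᵐ u ∂leb01, u ∈ Set.Ioc (0:ℝ) 1 := by
    rw [leb01]
    exact ae_restrict_mem measurableSet_Ioc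
  filter_upwards [hae, haeIoc] with u huE huIoc
  have hu1 : u < 1 := lt_of_le_of_ne huIoc.2 (fun h => huE (Or.inr h))
  have hu0 : 0 < u := huIoc.1
  have hne : ∃ z, u ≤ Fcdf μ z := S_nonempty hu1
  set x := Finv μ u with hx
  have hle : u ≤ Fcdf μ x := le_Fcdf_Finv hu0 hne
  have hFl : Fleft μ x ≤ u := Fleft_Finv_le hu0 hne
  have hgoal : Finv ν u = Finv ν (Fcdf μ x) := by
    by_cases hatom : 0 < μ {x}
    · have hne2 : u ≠ Fleft μ x := by
        intro h
        exact huE (Or.inl ⟨x, hatom, h.symm⟩)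
      exact hcond x hatom u ⟨lt_of_le_of_ne hFl (fun h => hne2 h.symm), hle⟩
    · have h0 : μ {x} = 0 := by
        by_contra h
        exact hatom (lt_of_le_of_ne (by positivity) (Ne.symm h))
      have heq : Fcdf μ x = Fleft μ x := by
        rw [Fcdf_eq_Fleft_add μ x, h0]
        simp
      have : u = Fcdf μ x := le_antisymm hle (heq ▸ hFl)
      rw [this]
  show (Finv μ u, Finv ν u) = (Finv μ u, Finv ν (Fcdf μ (Finv μ u)))
  exact Prod.ext rfl hgoal

lemma cond_of_map (hμ2 : FiniteSecondMomentR μ) (hν2 : FiniteSecondMomentR ν)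
    (T : ℝ → ℝ) (hT : Measurable T)
    (hset : {π : Measure (ℝ × ℝ) | IsOptimalCouplingR π μ ν} = {givenByMapR μ T}) :
    ∀ x : ℝ, 0 < μ {x} → ∀ u ∈ Set.Ioc (Fleft μ x) (Fcdf μ x),
      Finv ν u = Finv ν (Fcdf μ x) := by
  have hqc : qc μ ν = givenByMapR μ T := by
    have h1 : qc μ ν ∈ {π : Measure (ℝ × ℝ) | IsOptimalCouplingR π μ ν} := by
      rw [optimal_set_eq hμ2 hν2]
      rfl
    rw [hset] at h1
    exact h1
  intro x₀ hx₀ u hu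
  set a := Fleft μ x₀ with hadef
  set b := Fcdf μ x₀ with hbdef
  have hab : a < b := (atom_pos_iff μ x₀).1 hx₀
  have ha0 : 0 ≤ a := Fleft_nonneg μ x₀
  have hb1 : b ≤ 1 := Fcdf_le_one μ x₀
  have hFinvμ : ∀ v ∈ Set.Ioc a b, Finv μ v = x₀ := by
    intro v hv
    have h0v : 0 < v := lt_of_le_of_lt ha0 hv.1
    refine le_antisymm (Finv_le h0v hv.2) (le_csInf ⟨x₀, hv.2⟩ ?_)
    intro z hz
    by_contra hzx
    push_neg at hzx
    have hza : Fcdf μ z ≤ a :=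
      ENNReal.toReal_mono (measure_ne_top μ _)
        (measure_mono (Set.Iic_subset_Iio.2 hzx))
    have := Set.mem_setOf_eq ▸ hz
    have hva : v ≤ a := le_trans this hza
    linarith [hv.1]
  have hzero : volume {v : ℝ | v ∈ Set.Ioc a b ∧ Finv ν v ≠ T x₀} = 0 := by
    have hmap0 : givenByMapR μ T ({x₀} ×ˢ ({T x₀}ᶜ : Set ℝ)) = 0 := by
      rw [givenByMapR, Measure.map_apply
        (show Measurable fun x : ℝ => (x, T x) from measurable_id.prodMk hT)
        ((measurableSet_singleton x₀).prod (measurableSet_singleton (T x₀)).compl)]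
      have h : (fun x : ℝ => (x, T x)) ⁻¹' ({x₀} ×ˢ ({T x₀}ᶜ : Set ℝ)) = ∅ := by
        ext z
        simp only [Set.mem_preimage, Set.mem_prod, Set.mem_singleton_iff, Set.mem_compl_iff,
          Set.mem_empty_iff_false, iff_false, not_and]
        rintro rfl
        simp
      rw [h]
      exact measure_empty
    have hqc0 : qc μ ν ({x₀} ×ˢ ({T x₀}ᶜ : Set ℝ)) = 0 := by rw [hqc]; exact hmap0
    rw [qc, Measure.map_apply_of_aemeasurable (aemeasurable_qc_pair μ ν)
      ((measurableSet_singleton x₀).prod (measurableSet_singleton (T x₀)).compl),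
      leb01, Measure.restrict_apply' measurableSet_Ioc] at hqc0
    refine measure_mono_null ?_ hqc0
    rintro v ⟨hvIoc, hvne⟩
    refine ⟨?_, lt_of_le_of_lt ha0 hvIoc.1, le_trans hvIoc.2 hb1⟩
    simp only [Set.mem_preimage, Set.mem_prod, Set.mem_singleton_iff, Set.mem_compl_iff]
    exact ⟨hFinvμ v hvIoc, hvne⟩
  have hconst : ∀ v ∈ Set.Ioc a b, Finv ν v = T x₀ := by
    intro v hv
    have h0v : 0 < v := lt_of_le_of_lt ha0 hv.1
    have hv1 : v ≤ 1 := le_trans hv.2 hb1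
    have hwn : ∀ n : ℕ, ∃ w, w ∈ Set.Ioo (max a (v - ((n:ℝ)+1)⁻¹)) v ∧ Finv ν w = T x₀ := by
      intro n
      set l := max a (v - ((n:ℝ)+1)⁻¹) with hl
      have hinv : (0:ℝ) < ((n:ℝ)+1)⁻¹ := by positivity
      have hlv : l < v := max_lt hv.1 (by linarith)
      have hpos : volume (Set.Ioo l v) ≠ 0 := by
        rw [Real.volume_Ioo]
        exact (ENNReal.ofReal_pos.2 (by linarith)).ne'
      by_contra hcon
      push_neg at hcon
      apply hpos
      refine measure_mono_null ?_ hzero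
      intro w hw
      have hwa : a < w := lt_of_le_of_lt (le_max_left _ _) hw.1
      have hwb : w ≤ b := le_trans hw.2.le hv.2
      exact ⟨⟨hwa, hwb⟩, hcon w hw⟩
    choose w hw hwT using hwn
    have hwlt : ∀ n, w n < v := fun n => (hw n).2
    have hwgt : ∀ n, a < w n := fun n => lt_of_le_of_lt (le_max_left _ _) (hw n).1
    have hwv : Tendsto w atTop (𝓝 v) := by
      have h1 : Tendsto (fun n : ℕ => v - ((n:ℝ)+1)⁻¹) atTop (𝓝 v) := by
        have h2 : Tendsto (fun n : ℕ => ((n:ℝ)+1)⁻¹) atTop (𝓝 0) := by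
          have := tendsto_one_div_add_atTop_nhds_zero_nat (𝕜 := ℝ)
          simpa [one_div] using this
        simpa using tendsto_const_nhds.sub h2
      refine tendsto_of_tendsto_of_tendsto_of_le_of_le h1 tendsto_const_nhds ?_ ?_
      · intro n
        exact le_trans (le_max_right _ _) (hw n).1.le
      · intro n
        exact (hwlt n).le
    have hTS : v ≤ Fcdf ν (T x₀) := by
      have hn : ∀ n, w n ≤ Fcdf ν (T x₀) := by
        intro n
        have h0w : 0 < w n := lt_of_le_of_lt ha0 (hwgt n)
        have hwne : ∃ z, w n ≤ Fcdf ν z := S_nonempty (lt_of_lt_of_le (hwlt n) hv1)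
        have h := le_Fcdf_Finv h0w hwne
        rwa [hwT n] at h
      exact le_of_tendsto hwv (Filter.Eventually.of_forall hn)
    refine le_antisymm (Finv_le h0v hTS) ?_
    rw [← hwT 0]
    exact Finv_mono (lt_of_le_of_lt ha0 (hwgt 0)) (hwlt 0).le ⟨T x₀, hTS⟩
  rw [hconst u hu, hconst b ⟨hab, le_rfl⟩]

end OTAux

end

/-- Existence of an optimal transport map in dimension 1: it holds iff Fν⁻¹ is constant on
(Fμ(x-), Fμ(x)] at every atom x of μ, and then T = Fν⁻¹ ∘ Fμ. -/
theorem stmt2 (μ ν : Measure ℝ) [IsProbabilityMeasure μ] [IsProbabilityMeasure ν]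
    (hμ : FiniteSecondMomentR μ) (hν : FiniteSecondMomentR ν) :
    ((∃ T : ℝ → ℝ, Measurable T ∧
        {π | IsOptimalCouplingR π μ ν} = {givenByMapR μ T}) ↔
      (∀ x : ℝ, 0 < μ {x} →
        ∀ u ∈ Set.Ioc (Fleft μ x) (Fcdf μ x), Finv ν u = Finv ν (Fcdf μ x))) ∧
    ((∀ x : ℝ, 0 < μ {x} →
        ∀ u ∈ Set.Ioc (Fleft μ x) (Fcdf μ x), Finv ν u = Finv ν (Fcdf μ x)) →
      {π | IsOptimalCouplingR π μ ν} = {givenByMapR μ (fun x => Finv ν (Fcdf μ x))}) := by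
  have hpart2 : (∀ x : ℝ, 0 < μ {x} →
      ∀ u ∈ Set.Ioc (Fleft μ x) (Fcdf μ x), Finv ν u = Finv ν (Fcdf μ x)) →
      {π | IsOptimalCouplingR π μ ν} = {givenByMapR μ (fun x => Finv ν (Fcdf μ x))} := by
    intro hcond
    rw [OTAux.optimal_set_eq hμ hν, OTAux.qc_eq_map μ ν hcond]
  refine ⟨⟨?_, ?_⟩, hpart2⟩
  · rintro ⟨T, hT, hset⟩
    exact OTAux.cond_of_map μ ν hμ hν T hT hset
  · intro hcond
    exact ⟨fun x => Finv ν (Fcdf μ x), OTAux.measurable_T μ ν, hpart2 hcond⟩
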